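/- Let (R, m, k) be a Noetherian local ring, F a minimal free resolution of k, and suppose for some d ≥ 1 that the map υ^1_d : Tor_d^R(k, R/m^2) → Tor_d^R(k, R/m) is zero. Then every cycle of lin(F) in homological degree d lies in m*·lin(F)_d; equivalently, ker(∂*_d) ⊆ m*·F_d^g(-d). -/

import Mathlib

open CategoryTheory IsLocalRing

/-- The submodule `m^i N` of `N`. -/
abbrev mpi (R : Type u) [CommRing R] [IsLocalRing R]
    (N : Type u) [AddCommGroup N] [Module R N] (i : ℕ) : Submodule R N :=
  (maximalIdeal R ^ i) • (⊤ : Submodule R N)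

open MonoidalCategory
open scoped TensorProduct

universe u

namespace Stmt19Aux


variable {R : Type u} [CommRing R]

lemma tmul_right_zero {I : Ideal R} {M : Type u} [AddCommGroup M] [Module R M]
    {y : M} (hy : y ∈ (I • ⊤ : Submodule R M)) (c : R ⧸ I) :
    (c ⊗ₜ[R] y : (R ⧸ I) ⊗[R] M) = 0 := by
  refine Submodule.smul_induction_on hy (fun r hr n _ => ?_) (fun a b ha hb => ?_)
  · obtain ⟨s, rfl⟩ := Submodule.Quotient.mk_surjective _ c
    have h1 : r • (Submodule.Quotient.mk s : R ⧸ I) = 0 := by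
      rw [← Submodule.Quotient.mk_smul, Submodule.Quotient.mk_eq_zero]
      simpa [smul_eq_mul] using I.mul_mem_right s hr
    rw [← TensorProduct.smul_tmul, h1, TensorProduct.zero_tmul]
  · rw [TensorProduct.tmul_add, ha, hb, add_zero]

lemma tmul_left_zero {I : Ideal R} {M : Type u} [AddCommGroup M] [Module R M]
    {y : M} (hy : y ∈ (I • ⊤ : Submodule R M)) (c : R ⧸ I) :
    (y ⊗ₜ[R] c : M ⊗[R] (R ⧸ I)) = 0 := by
  refine Submodule.smul_induction_on hy (fun r hr n _ => ?_) (fun a b ha hb => ?_)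
  · obtain ⟨s, rfl⟩ := Submodule.Quotient.mk_surjective _ c
    have h1 : r • (Submodule.Quotient.mk s : R ⧸ I) = 0 := by
      rw [← Submodule.Quotient.mk_smul, Submodule.Quotient.mk_eq_zero]
      simpa [smul_eq_mul] using I.mul_mem_right s hr
    rw [TensorProduct.smul_tmul, h1, TensorProduct.tmul_zero]
  · rw [TensorProduct.add_tmul, ha, hb, add_zero]

lemma lTensor_quot_zero {I : Ideal R} {M N : Type u} [AddCommGroup M] [Module R M]
    [AddCommGroup N] [Module R N] (g : N →ₗ[R] M)
    (hg : ∀ y, g y ∈ (I • ⊤ : Submodule R M)) :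
    LinearMap.lTensor (R ⧸ I) g = 0 :=
  TensorProduct.ext' fun c n => by
    simpa using tmul_right_zero (hg n) c

lemma lt_rt_comm {A A' B B' : Type u} [AddCommGroup A] [Module R A] [AddCommGroup A'] [Module R A']
    [AddCommGroup B] [Module R B] [AddCommGroup B'] [Module R B']
    (f : A →ₗ[R] A') (g : B →ₗ[R] B') (c : A ⊗[R] B) :
    LinearMap.lTensor A' g (LinearMap.rTensor B f c) =
      LinearMap.rTensor B' f (LinearMap.lTensor A g c) := by
  induction c with
  | zero => simp
  | tmul a b => simp
  | add a b ha hb => simp [ha, hb]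

/-- The map `M ⊗ R/I → M/IM` sending `z ⊗ [r] ↦ [r • z]`. -/
noncomputable def theta (I : Ideal R) (M : Type u) [AddCommGroup M] [Module R M] :
    M ⊗[R] (R ⧸ I) →ₗ[R] M ⧸ (I • ⊤ : Submodule R M) := by
  refine TensorProduct.lift ?_
  refine
    { toFun := fun z => Submodule.liftQ I
        ((Submodule.mkQ _).comp (LinearMap.toSpanSingleton R M z)) ?_
      map_add' := ?_
      map_smul' := ?_ }
  · intro r hr
    simp only [LinearMap.mem_ker, LinearMap.comp_apply, LinearMap.toSpanSingleton_apply,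
      Submodule.mkQ_apply, Submodule.Quotient.mk_eq_zero]
    exact Submodule.smul_mem_smul hr Submodule.mem_top
  · intro z₁ z₂
    refine LinearMap.ext fun t => ?_
    obtain ⟨r, rfl⟩ := Submodule.Quotient.mk_surjective _ t
    simp only [LinearMap.add_apply]
    show Submodule.Quotient.mk (r • (z₁ + z₂)) =
      Submodule.Quotient.mk (r • z₁) + Submodule.Quotient.mk (r • z₂)
    rw [← Submodule.Quotient.mk_add, smul_add]
  · intro r z
    refine LinearMap.ext fun t => ?_
    obtain ⟨s, rfl⟩ := Submodule.Quotient.mk_surjective _ t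
    simp only [LinearMap.smul_apply, RingHom.id_apply]
    show Submodule.Quotient.mk (s • (r • z)) = r • Submodule.Quotient.mk (s • z)
    rw [← Submodule.Quotient.mk_smul, smul_comm]

@[simp]
lemma theta_tmul (I : Ideal R) (M : Type u) [AddCommGroup M] [Module R M] (z : M) (r : R) :
    theta I M (z ⊗ₜ (Submodule.Quotient.mk r)) = Submodule.Quotient.mk (r • z) := rfl

lemma theta_rTensor_zero {I : Ideal R} {M N : Type u} [AddCommGroup M] [Module R M]
    [AddCommGroup N] [Module R N] (g : N →ₗ[R] M)
    (hg : ∀ y, g y ∈ (I • ⊤ : Submodule R M)) (c : N ⊗[R] (R ⧸ I)) :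
    theta I M (LinearMap.rTensor (R ⧸ I) g c) = 0 := by
  induction c with
  | zero => simp
  | tmul n t =>
      obtain ⟨r, rfl⟩ := Submodule.Quotient.mk_surjective _ t
      rw [LinearMap.rTensor_tmul, theta_tmul, Submodule.Quotient.mk_eq_zero]
      exact Submodule.smul_mem _ r (hg n)
  | add a b ha hb => rw [map_add, map_add, ha, hb, add_zero]


variable {R : Type u} [CommRing R]

/-- The zig-zag chain predicate in the double complex `CF ⊗ CP`. -/
def Good (CF CP : ChainComplex (ModuleCat.{u} R) ℕ) (e : ℕ)
    (x : CF.X (e+1)) (u0 : CP.X 0) :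
    (p s : ℕ) → ((CF.X s : Type u) ⊗[R] (CP.X p : Type u)) → Prop
  | 0, s, w => ∃ h : e + 1 = s,
      w = cast (congrArg (fun t => ((CF.X t : Type u) ⊗[R] (CP.X 0 : Type u) : Type u)) h)
        (x ⊗ₜ[R] u0)
  | p+1, s, w => ∃ w' : (CF.X (s+1) : Type u) ⊗[R] (CP.X p : Type u),
      Good CF CP e x u0 p (s+1) w' ∧
      LinearMap.lTensor (CF.X s) (CP.d (p+1) p).hom w =
        LinearMap.rTensor (CP.X p) (CF.d (s+1) s).hom w'

variable {CF CP : ChainComplex (ModuleCat.{u} R) ℕ} {e : ℕ}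
  {x : CF.X (e+1)} {u0 : CP.X 0}

lemma buildChain
    (hflat : ∀ n, Module.Flat R (CF.X n))
    (hPex : ∀ n, Function.Exact ((CP.d (n+2) (n+1)).hom : CP.X (n+2) →ₗ[R] CP.X (n+1))
      ((CP.d (n+1) n).hom : CP.X (n+1) →ₗ[R] CP.X n))
    (hbase : (((CF.d (e+1) e).hom : CF.X (e+1) →ₗ[R] CF.X e) x) ⊗ₜ[R] u0 ∈
      Set.range (LinearMap.lTensor (CF.X e) ((CP.d 1 0).hom : CP.X 1 →ₗ[R] CP.X 0))) :
    ∀ p s, s + p = e + 1 → ∃ w, Good CF CP e x u0 p s w := by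
  intro p
  induction p with
  | zero =>
      intro s hs
      have hs' : s = e + 1 := by omega
      subst hs'
      exact ⟨x ⊗ₜ u0, rfl, rfl⟩
  | succ p ih =>
      intro s hs
      obtain ⟨w', hw'⟩ := ih (s+1) (by omega)
      have hmem : LinearMap.rTensor (CP.X p) ((CF.d (s+1) s).hom : CF.X (s+1) →ₗ[R] CF.X s) w' ∈
          Set.range (LinearMap.lTensor (CF.X s) ((CP.d (p+1) p).hom : CP.X (p+1) →ₗ[R] CP.X p)) := by
        cases p with
        | zero =>
            obtain ⟨h0, hw0⟩ := hw'
            have hs' : s = e := by omega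
            subst hs'
            have hw1 : w' = x ⊗ₜ u0 := hw0
            rw [hw1, LinearMap.rTensor_tmul]
            exact hbase
        | succ p' =>
            obtain ⟨w'', _, rel⟩ := hw'
            have hz : LinearMap.lTensor (CF.X s) ((CP.d (p'+1) p').hom : CP.X (p'+1) →ₗ[R] CP.X p')
                (LinearMap.rTensor (CP.X (p'+1)) ((CF.d (s+1) s).hom : CF.X (s+1) →ₗ[R] CF.X s) w') = 0 := by
              have hdd : (((CF.d (s+1) s).hom : CF.X (s+1) →ₗ[R] CF.X s) ∘ₗ
                  ((CF.d (s+2) (s+1)).hom : CF.X (s+2) →ₗ[R] CF.X (s+1))) = 0 :=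
                LinearMap.ext fun v => by
                  exact LinearMap.congr_fun (congrArg ModuleCat.Hom.hom (CF.d_comp_d (s+2) (s+1) s)) v
              rw [lt_rt_comm, rel, ← LinearMap.rTensor_comp_apply, hdd,
                LinearMap.rTensor_zero, LinearMap.zero_apply]
            have hfl := hflat s
            exact (Module.Flat.lTensor_exact (CF.X s) (hPex p') _).mp hz
      obtain ⟨w, hw⟩ := hmem
      exact ⟨w, w', hw', hw⟩

lemma descChain (φ : CP ⟶ CF) (C : Prop)
    (hflat : ∀ n, Module.Flat R (CF.X n))
    (hFex : ∀ n, Function.Exact ((CF.d (n+2) (n+1)).hom : CF.X (n+2) →ₗ[R] CF.X (n+1))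
      ((CF.d (n+1) n).hom : CF.X (n+1) →ₗ[R] CF.X n))
    (hend : ∀ (a : (CF.X (e+2) : Type u) ⊗[R] (CF.X 0 : Type u))
        (b : (CF.X (e+1) : Type u) ⊗[R] (CF.X 1 : Type u)),
        LinearMap.lTensor (CF.X (e+1)) ((φ.f 0).hom : CP.X 0 →ₗ[R] CF.X 0) (x ⊗ₜ[R] u0) =
          LinearMap.rTensor (CF.X 0) ((CF.d (e+2) (e+1)).hom : CF.X (e+2) →ₗ[R] CF.X (e+1)) a +
          LinearMap.lTensor (CF.X (e+1)) ((CF.d 1 0).hom : CF.X 1 →ₗ[R] CF.X 0) b → C) :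
    ∀ p s, s + p = e + 1 → ∀ w, Good CF CP e x u0 p s w →
      (∃ (a : (CF.X (s+1) : Type u) ⊗[R] (CF.X p : Type u))
         (b : (CF.X s : Type u) ⊗[R] (CF.X (p+1) : Type u)),
        LinearMap.lTensor (CF.X s) ((φ.f p).hom : CP.X p →ₗ[R] CF.X p) w =
          LinearMap.rTensor (CF.X p) ((CF.d (s+1) s).hom : CF.X (s+1) →ₗ[R] CF.X s) a +
          LinearMap.lTensor (CF.X s) ((CF.d (p+1) p).hom : CF.X (p+1) →ₗ[R] CF.X p) b) → C := by
  intro p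
  induction p with
  | zero =>
      intro s hs w hG hv
      have hs' : s = e + 1 := by omega
      subst hs'
      obtain ⟨h0, hw0⟩ := hG
      have hw1 : w = x ⊗ₜ u0 := hw0
      subst hw1
      obtain ⟨a, b, hab⟩ := hv
      exact hend a b hab
  | succ p ih =>
      intro s hs w hG hv
      obtain ⟨w', hG', rel⟩ := hG
      obtain ⟨a, b, hab⟩ := hv
      -- key identity:  rT (d_{s+1,s}) (v_p - lT (d_{p+1,p}) a) = 0
      have comm : (((CF.d (p+1) p).hom : CF.X (p+1) →ₗ[R] CF.X p) ∘ₗ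
            ((φ.f (p+1)).hom : CP.X (p+1) →ₗ[R] CF.X (p+1))) =
          (((φ.f p).hom : CP.X p →ₗ[R] CF.X p) ∘ₗ ((CP.d (p+1) p).hom : CP.X (p+1) →ₗ[R] CP.X p)) :=
        LinearMap.ext fun v => by
          exact LinearMap.congr_fun (congrArg ModuleCat.Hom.hom (φ.comm (p+1) p)) v
      have hdd : (((CF.d (p+1) p).hom : CF.X (p+1) →ₗ[R] CF.X p) ∘ₗ
          ((CF.d (p+2) (p+1)).hom : CF.X (p+2) →ₗ[R] CF.X (p+1))) = 0 :=
        LinearMap.ext fun v => by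
          exact LinearMap.congr_fun (congrArg ModuleCat.Hom.hom (CF.d_comp_d (p+2) (p+1) p)) v
      have key : LinearMap.rTensor (CF.X p) ((CF.d (s+1) s).hom : CF.X (s+1) →ₗ[R] CF.X s)
          (LinearMap.lTensor (CF.X (s+1)) ((φ.f p).hom : CP.X p →ₗ[R] CF.X p) w' -
            LinearMap.lTensor (CF.X (s+1)) ((CF.d (p+1) p).hom : CF.X (p+1) →ₗ[R] CF.X p) a) = 0 := by
        rw [map_sub]
        have e1 : LinearMap.rTensor (CF.X p) ((CF.d (s+1) s).hom : CF.X (s+1) →ₗ[R] CF.X s)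
            (LinearMap.lTensor (CF.X (s+1)) ((φ.f p).hom : CP.X p →ₗ[R] CF.X p) w') =
            LinearMap.lTensor (CF.X s) ((CF.d (p+1) p).hom : CF.X (p+1) →ₗ[R] CF.X p)
              (LinearMap.lTensor (CF.X s) ((φ.f (p+1)).hom : CP.X (p+1) →ₗ[R] CF.X (p+1)) w) := by
          conv_rhs => rw [← LinearMap.lTensor_comp_apply, comm,
            LinearMap.lTensor_comp_apply, rel, lt_rt_comm]
        have e2 : LinearMap.lTensor (CF.X s) ((CF.d (p+1) p).hom : CF.X (p+1) →ₗ[R] CF.X p)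
            (LinearMap.lTensor (CF.X s) ((φ.f (p+1)).hom : CP.X (p+1) →ₗ[R] CF.X (p+1)) w) =
            LinearMap.rTensor (CF.X p) ((CF.d (s+1) s).hom : CF.X (s+1) →ₗ[R] CF.X s)
              (LinearMap.lTensor (CF.X (s+1)) ((CF.d (p+1) p).hom : CF.X (p+1) →ₗ[R] CF.X p) a) := by
          rw [hab, map_add, lt_rt_comm, ← LinearMap.lTensor_comp_apply, hdd]
          simp
        rw [e1, e2, sub_self]
      have hfl := hflat p
      obtain ⟨a', ha'⟩ := (Module.Flat.rTensor_exact (CF.X p) (hFex s) _).mp key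
      refine ih (s+1) (by omega) w' hG' ⟨a', a, ?_⟩
      have : LinearMap.lTensor (CF.X (s+1)) ((φ.f p).hom : CP.X p →ₗ[R] CF.X p) w' =
          LinearMap.rTensor (CF.X p) ((CF.d (s+2) (s+1)).hom : CF.X (s+2) →ₗ[R] CF.X (s+1)) a' +
          LinearMap.lTensor (CF.X (s+1)) ((CF.d (p+1) p).hom : CF.X (p+1) →ₗ[R] CF.X p) a := by
        rw [ha']; abel
      exact this


end Stmt19Aux

open Stmt19Aux

/-- Let `(R, m, k)` be a Noetherian local ring, `F` a minimal free
resolution of `k`, and suppose for some `d = j + 1 ≥ 1` that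
`υ¹_d : Tor_d(k, R/m²) → Tor_d(k, R/m)` is zero.  Then every cycle of `lin(F)` in
homological degree `d` lies in `m* · lin(F)_d = m* · F_d^g(-d)`: at the level of
pieces, if `x ∈ m^i F_d` satisfies `∂ x ∈ m^(i+2) F_(d-1)` (i.e. its class is a cycle
in `m^i F_d / m^(i+1) F_d`), then `x ∈ m^(max i 1) F_d`. -/
theorem stmt19 (R : Type u) [CommRing R] [IsNoetherianRing R] [IsLocalRing R]
    (F : ProjectiveResolution (ModuleCat.of R (R ⧸ maximalIdeal R)))
    (hfree : ∀ n, Module.Free R (F.complex.X n))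
    (hfin : ∀ n, Module.Finite R (F.complex.X n))
    (hmin : ∀ n, LinearMap.range (F.complex.d (n + 1) n).hom ≤ mpi R (F.complex.X n) 1)
    (j : ℕ)
    (hups : ((Tor (ModuleCat.{u} R) (j + 1)).obj
        (ModuleCat.of R (R ⧸ maximalIdeal R))).map
      (ModuleCat.ofHom (Submodule.mapQ (maximalIdeal R ^ 2) (maximalIdeal R)
          LinearMap.id (Ideal.pow_le_self two_ne_zero)) :
        ModuleCat.of R (R ⧸ (maximalIdeal R ^ 2)) ⟶
          ModuleCat.of R (R ⧸ maximalIdeal R)) = 0) :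
    ∀ (i : ℕ) (x : F.complex.X (j + 1)), x ∈ mpi R (F.complex.X (j + 1)) i →
      F.complex.d (j + 1) j x ∈ mpi R (F.complex.X j) (i + 2) →
      x ∈ mpi R (F.complex.X (j + 1)) (max i 1) := by
  intro i x hxi hdx
  rcases i with _ | i
  case succ =>
    rw [show max (i+1) 1 = i+1 from by omega]
    exact hxi
  case zero =>
  clear hxi
  rw [show max 0 1 = 1 from by omega]
  show x ∈ (maximalIdeal R ^ 1 • ⊤ : Submodule R (F.complex.X (j+1)))
  rw [pow_one]
  -- setup
  let kk : ModuleCat.{u} R := ModuleCat.of R (R ⧸ maximalIdeal R)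
  let kk2 : ModuleCat.{u} R := ModuleCat.of R (R ⧸ (maximalIdeal R ^ 2))
  let q' : kk2 ⟶ kk := ModuleCat.ofHom (Submodule.mapQ (maximalIdeal R ^ 2) (maximalIdeal R)
      LinearMap.id (Ideal.pow_le_self two_ne_zero))
  obtain ⟨P⟩ : Nonempty (ProjectiveResolution kk2) := HasProjectiveResolution.out
  let G : ModuleCat.{u} R ⥤ ModuleCat.{u} R := (tensoringLeft (ModuleCat.{u} R)).obj kk
  let φ : P.complex ⟶ F.complex := ProjectiveResolution.lift q' P F
  let ψ := (G.mapHomologicalComplex (ComplexShape.down ℕ)).map φ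
  let K := (G.mapHomologicalComplex (ComplexShape.down ℕ)).obj P.complex
  let L := (G.mapHomologicalComplex (ComplexShape.down ℕ)).obj F.complex
  -- from hups : the homology map vanishes
  have hld : (G.leftDerived (j+1)).map q' = 0 := hups
  have hHmap : (G.mapHomologicalComplex (ComplexShape.down ℕ) ⋙
      HomologicalComplex.homologyFunctor _ _ (j+1)).map φ = 0 := by
    have h1 := Functor.leftDerived_map_eq G (j+1) q' φ (ProjectiveResolution.lift_commutes q' P F)
    rw [hld] at h1
    have h2 := h1.symm
    have h3 : ((G.mapHomologicalComplex (ComplexShape.down ℕ) ⋙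
        HomologicalComplex.homologyFunctor _ _ (j+1)).map φ) ≫
          (F.isoLeftDerivedObj G (j+1)).inv = 0 :=
      (cancel_epi (P.isoLeftDerivedObj G (j+1)).hom).mp (by rw [Limits.comp_zero]; exact h2)
    exact (cancel_mono (F.isoLeftDerivedObj G (j+1)).inv).mp (by rw [Limits.zero_comp]; exact h3)
  have hH : HomologicalComplex.homologyMap ψ (j+1) = 0 := hHmap
  -- differentials of L vanish
  have hL0 : ∀ n : ℕ, (L.d (n+1) n) = 0 := by
    intro n
    show G.map (F.complex.d (n+1) n) = 0
    refine ModuleCat.hom_ext (lTensor_quot_zero (I := maximalIdeal R) (F.complex.d (n+1) n).hom (fun y => ?_))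
    have h : F.complex.d (n+1) n y ∈ (maximalIdeal R ^ 1 • ⊤ : Submodule R (F.complex.X n)) :=
      hmin n ⟨y, rfl⟩
    rwa [pow_one] at h
  have hπ : IsIso (L.homologyπ (j+1)) :=
    L.isIso_homologyπ (j+2) (j+1) (by rw [ChainComplex.prev]; omega) (hL0 (j+1))
  have hcy : HomologicalComplex.cyclesMap ψ (j+1) = 0 := by
    have hn := HomologicalComplex.homologyπ_naturality ψ (j+1)
    rw [hH, Limits.comp_zero] at hn
    have := hπ
    rw [← cancel_mono (L.homologyπ (j+1)), Limits.zero_comp]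
    exact hn.symm
  have hkey : ∀ y : K.X (j+1), K.d (j+1) j y = 0 → ψ.f (j+1) y = 0 := by
    intro y hy
    let yh : ModuleCat.of R R ⟶ K.X (j+1) := ModuleCat.ofHom (LinearMap.toSpanSingleton R _ y)
    have hc : yh ≫ K.d (j+1) j = 0 := by
      refine ModuleCat.hom_ext (LinearMap.ext fun r => ?_)
      show K.d (j+1) j (r • y) = 0
      rw [map_smul, hy, smul_zero]
    have h1 : K.liftCycles yh j (ChainComplex.next_nat_succ j) hc ≫ K.iCycles (j+1) = yh :=
      K.liftCycles_i _ _ _ _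
    have h2 : K.iCycles (j+1) ≫ ψ.f (j+1) = 0 := by
      rw [← HomologicalComplex.cyclesMap_i ψ (j+1), hcy, Limits.zero_comp]
    have h3 : yh ≫ ψ.f (j+1) = 0 := by
      rw [← h1, Category.assoc, h2, Limits.comp_zero]
    have h4 := LinearMap.congr_fun (congrArg ModuleCat.Hom.hom h3) (1 : R)
    have h5 : ψ.f (j+1) ((1:R) • y) = 0 := h4
    simpa using h5
  -- augmentations and exactness
  let εF : F.complex.X 0 ⟶ kk := F.π.f 0
  let εP : P.complex.X 0 ⟶ kk2 := P.π.f 0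
  have hεFd : ∀ v, εF (F.complex.d 1 0 v) = 0 := fun v =>
    LinearMap.congr_fun (congrArg ModuleCat.Hom.hom F.complex_d_comp_π_f_zero) v
  have exF : ∀ n, Function.Exact ((F.complex.d (n+2) (n+1)).hom : F.complex.X (n+2) →ₗ[R] F.complex.X (n+1))
      ((F.complex.d (n+1) n).hom : F.complex.X (n+1) →ₗ[R] F.complex.X n) := by
    intro n z
    constructor
    · intro hz
      obtain ⟨w, hw⟩ := (ShortComplex.moduleCat_exact_iff _).mp (F.exact_succ n) z hz
      exact ⟨w, hw⟩
    · rintro ⟨w, rfl⟩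
      exact LinearMap.congr_fun (congrArg ModuleCat.Hom.hom (F.complex.d_comp_d (n+2) (n+1) n)) w
  have exP : ∀ n, Function.Exact ((P.complex.d (n+2) (n+1)).hom : P.complex.X (n+2) →ₗ[R] P.complex.X (n+1))
      ((P.complex.d (n+1) n).hom : P.complex.X (n+1) →ₗ[R] P.complex.X n) := by
    intro n z
    constructor
    · intro hz
      obtain ⟨w, hw⟩ := (ShortComplex.moduleCat_exact_iff _).mp (P.exact_succ n) z hz
      exact ⟨w, hw⟩
    · rintro ⟨w, rfl⟩
      exact LinearMap.congr_fun (congrArg ModuleCat.Hom.hom (P.complex.d_comp_d (n+2) (n+1) n)) w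
  have exF0 : Function.Exact ((F.complex.d 1 0).hom : F.complex.X 1 →ₗ[R] F.complex.X 0)
      (εF.hom : F.complex.X 0 →ₗ[R] kk) := by
    intro z
    constructor
    · intro hz
      obtain ⟨w, hw⟩ := (ShortComplex.moduleCat_exact_iff _).mp F.exact₀ z hz
      exact ⟨w, hw⟩
    · rintro ⟨w, rfl⟩
      exact hεFd w
  have exP0 : Function.Exact ((P.complex.d 1 0).hom : P.complex.X 1 →ₗ[R] P.complex.X 0)
      (εP.hom : P.complex.X 0 →ₗ[R] kk2) := by
    intro z
    constructor
    · intro hz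
      obtain ⟨w, hw⟩ := (ShortComplex.moduleCat_exact_iff _).mp P.exact₀ z hz
      exact ⟨w, hw⟩
    · rintro ⟨w, rfl⟩
      exact LinearMap.congr_fun (congrArg ModuleCat.Hom.hom P.complex_d_comp_π_f_zero) w
  have hsurj : Function.Surjective (εP.hom : P.complex.X 0 →ₗ[R] kk2) := by
    have h : Epi (P.π.f 0) := inferInstance
    rwa [ModuleCat.epi_iff_surjective] at h
  obtain ⟨u0, hu0⟩ := hsurj (Submodule.Quotient.mk (1:R))
  have hflatF : ∀ n, Module.Flat R (F.complex.X n) := fun n => by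
    have := hfree n; infer_instance
  -- the forward zig-zag
  have hbase : (((F.complex.d (j+1) j).hom : F.complex.X (j+1) →ₗ[R] F.complex.X j) x) ⊗ₜ[R] u0 ∈
      Set.range (LinearMap.lTensor (F.complex.X j)
        ((P.complex.d 1 0).hom : P.complex.X 1 →ₗ[R] P.complex.X 0)) := by
    have hz : LinearMap.lTensor (F.complex.X j) (εP.hom : P.complex.X 0 →ₗ[R] kk2)
        ((((F.complex.d (j+1) j).hom : F.complex.X (j+1) →ₗ[R] F.complex.X j) x) ⊗ₜ[R] u0) = 0 := by
      rw [LinearMap.lTensor_tmul, hu0]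
      exact tmul_left_zero hdx _
    have hfl := hflatF j
    exact (Module.Flat.lTensor_exact (F.complex.X j) exP0 _).mp hz
  obtain ⟨wd, hwd⟩ := buildChain (CF := F.complex) (CP := P.complex) (e := j) (x := x)
    (u0 := u0) hflatF exP hbase (j+1) 0 (by omega)
  obtain ⟨w', hG', rel⟩ := hwd
  -- the cycle in kk ⊗ P and its image
  have hycyc : K.d (j+1) j
      (LinearMap.rTensor (P.complex.X (j+1)) (εF.hom : F.complex.X 0 →ₗ[R] kk) wd) = 0 := by
    have hd : (K.d (j+1) j) (LinearMap.rTensor (P.complex.X (j+1)) (εF.hom : F.complex.X 0 →ₗ[R] kk) wd)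
        = LinearMap.lTensor (kk : Type u) ((P.complex.d (j+1) j).hom : P.complex.X (j+1) →ₗ[R] P.complex.X j)
          (LinearMap.rTensor (P.complex.X (j+1)) (εF.hom : F.complex.X 0 →ₗ[R] kk) wd) := rfl
    rw [hd, lt_rt_comm, rel, ← LinearMap.rTensor_comp_apply]
    have h0 : ((εF.hom : F.complex.X 0 →ₗ[R] kk) ∘ₗ
        ((F.complex.d 1 0).hom : F.complex.X 1 →ₗ[R] F.complex.X 0)) = 0 :=
      LinearMap.ext fun v => hεFd v
    rw [h0, LinearMap.rTensor_zero, LinearMap.zero_apply]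
    rfl
  have hψy := hkey _ hycyc
  have hvd : LinearMap.rTensor (F.complex.X (j+1)) (εF.hom : F.complex.X 0 →ₗ[R] kk)
      (LinearMap.lTensor (F.complex.X 0)
        ((φ.f (j+1)).hom : P.complex.X (j+1) →ₗ[R] F.complex.X (j+1)) wd) = 0 := by
    rw [← lt_rt_comm]
    exact hψy
  have hfl2 := hflatF (j+1)
  obtain ⟨a0, ha0⟩ := (Module.Flat.rTensor_exact (F.complex.X (j+1)) exF0 _).mp hvd
  -- the backward zig-zag
  refine descChain (CF := F.complex) (CP := P.complex) (e := j) (x := x) (u0 := u0) φ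
    (x ∈ (maximalIdeal R • ⊤ : Submodule R (F.complex.X (j+1)))) hflatF exF ?_ (j+1) 0
    (by omega) wd ⟨w', hG', rel⟩ ⟨a0, 0, by rw [map_zero, add_zero]; exact ha0.symm⟩
  intro a b hab
  have hq : (εF.hom : F.complex.X 0 →ₗ[R] kk) (((φ.f 0).hom : P.complex.X 0 →ₗ[R] F.complex.X 0) u0) =
      Submodule.Quotient.mk (1:R) := by
    have h2 : (εF.hom : F.complex.X 0 →ₗ[R] kk) (((φ.f 0).hom : P.complex.X 0 →ₗ[R] F.complex.X 0) u0)
        = q' (εP u0) :=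
      LinearMap.congr_fun (congrArg ModuleCat.Hom.hom (ProjectiveResolution.lift_commutes_zero q' P F)) u0
    rw [h2, hu0]
    show (Submodule.mapQ (maximalIdeal R ^ 2) (maximalIdeal R) LinearMap.id
      (Ideal.pow_le_self two_ne_zero)) (Submodule.Quotient.mk 1) = Submodule.Quotient.mk (1:R)
    rw [Submodule.mapQ_apply, LinearMap.id_apply]
  have happ := congrArg (fun t => theta (maximalIdeal R) (F.complex.X (j+1))
    (LinearMap.lTensor (F.complex.X (j+1)) (εF.hom : F.complex.X 0 →ₗ[R] kk) t)) hab
  simp only [map_add] at happ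
  have hL1 : theta (maximalIdeal R) (F.complex.X (j+1))
      (LinearMap.lTensor (F.complex.X (j+1)) (εF.hom : F.complex.X 0 →ₗ[R] kk)
        (LinearMap.lTensor (F.complex.X (j+1))
          ((φ.f 0).hom : P.complex.X 0 →ₗ[R] F.complex.X 0) (x ⊗ₜ[R] u0))) =
      Submodule.Quotient.mk x := by
    rw [LinearMap.lTensor_tmul, LinearMap.lTensor_tmul, hq, theta_tmul, one_smul]
  have hT1 : theta (maximalIdeal R) (F.complex.X (j+1))
      (LinearMap.lTensor (F.complex.X (j+1)) (εF.hom : F.complex.X 0 →ₗ[R] kk)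
        (LinearMap.rTensor (F.complex.X 0)
          ((F.complex.d (j+2) (j+1)).hom : F.complex.X (j+2) →ₗ[R] F.complex.X (j+1)) a)) = 0 := by
    rw [lt_rt_comm]
    refine theta_rTensor_zero _ (fun v => ?_) _
    have h : F.complex.d (j+2) (j+1) v ∈
        (maximalIdeal R ^ 1 • ⊤ : Submodule R (F.complex.X (j+1))) := hmin (j+1) ⟨v, rfl⟩
    rwa [pow_one] at h
  have hT2 : theta (maximalIdeal R) (F.complex.X (j+1))
      (LinearMap.lTensor (F.complex.X (j+1)) (εF.hom : F.complex.X 0 →ₗ[R] kk)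
        (LinearMap.lTensor (F.complex.X (j+1))
          ((F.complex.d 1 0).hom : F.complex.X 1 →ₗ[R] F.complex.X 0) b)) = 0 := by
    rw [← LinearMap.lTensor_comp_apply]
    have h0 : ((εF.hom : F.complex.X 0 →ₗ[R] kk) ∘ₗ
        ((F.complex.d 1 0).hom : F.complex.X 1 →ₗ[R] F.complex.X 0)) = 0 :=
      LinearMap.ext fun v => hεFd v
    rw [h0, LinearMap.lTensor_zero, LinearMap.zero_apply, map_zero]
  rw [hL1, hT1, hT2, add_zero] at happ
  exact (Submodule.Quotient.mk_eq_zero _).mp happ
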